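/- Let A, B ∈ ℝ^{N×s} both have full column rank, let λ_max be the largest eigenvalue of the consistency matrix M_c = I_s − (A†B)(B†A), and let v be an eigenvector of M_c with eigenvalue λ_max. Then the unit vector u* = A v / ‖A v‖ attains the supremum sup { ‖u − B B† u‖² : u ∈ col(A), ‖u‖ = 1 }; that is, ‖u* − B B† u*‖² = λ_max and this is the maximal value of ‖u − B B† u‖² over unit u ∈ col(A). -/

import Mathlib

open Matrix

lemma inv_mul_helper {lam c d : ℝ} (h : c * c = d) (hc : c ≠ 0) :
    c⁻¹ * (c⁻¹ * (lam * d)) = lam := by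
  subst h; field_simp

lemma inv_mul_helper2 {c d : ℝ} (h : c * c = d) (hc : c ≠ 0) :
    c⁻¹ * (c⁻¹ * d) = 1 := by
  subst h; field_simp

lemma sum_sq_eq_dot {n : ℕ} (x : Fin n → ℝ) : ∑ i, x i ^ 2 = x ⬝ᵥ x := by
  simp [dotProduct, sq]

lemma matrix_eq_of_mulVec_eq {m n : ℕ} {M N : Matrix (Fin m) (Fin n) ℝ}
    (h : ∀ x, M *ᵥ x = N *ᵥ x) : M = N := by
  ext i j
  simpa using congrFun (h (Pi.single j 1)) i

lemma rayleigh_bound {n : ℕ} {H : Matrix (Fin n) (Fin n) ℝ} (hH : H.IsHermitian)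
    {lam : ℝ} (hb : ∀ i, hH.eigenvalues i ≤ lam) (z : Fin n → ℝ) :
    z ⬝ᵥ H *ᵥ z ≤ lam * (z ⬝ᵥ z) := by
  classical
  set U : Matrix (Fin n) (Fin n) ℝ := (hH.eigenvectorUnitary : Matrix (Fin n) (Fin n) ℝ) with hUdef
  have hsp : H = U * Matrix.diagonal hH.eigenvalues * Uᵀ := by
    have h := hH.spectral_theorem
    simpa [← Matrix.conjTranspose_eq_transpose_of_trivial, Function.comp, Matrix.star_eq_conjTranspose] using h
  have hUU' : U * star U = 1 := (Matrix.mem_unitaryGroup_iff).mp hH.eigenvectorUnitary.2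
  have hUU : U * Uᵀ = 1 := by
    rw [← Matrix.conjTranspose_eq_transpose_of_trivial]
    exact hUU'
  set y : Fin n → ℝ := Uᵀ *ᵥ z with hy
  have h1 : z ⬝ᵥ H *ᵥ z = y ⬝ᵥ (Matrix.diagonal hH.eigenvalues) *ᵥ y := by
    conv_lhs => rw [hsp]
    rw [← mulVec_mulVec, ← mulVec_mulVec, dotProduct_mulVec, ← mulVec_transpose]
  have h2 : y ⬝ᵥ y = z ⬝ᵥ z := by
    calc y ⬝ᵥ y = y ⬝ᵥ Uᵀ *ᵥ z := rfl
    _ = (y ᵥ* Uᵀ) ⬝ᵥ z := dotProduct_mulVec _ _ _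
    _ = (U *ᵥ y) ⬝ᵥ z := by rw [vecMul_transpose]
    _ = ((U * Uᵀ) *ᵥ z) ⬝ᵥ z := by rw [hy, mulVec_mulVec]
    _ = z ⬝ᵥ z := by rw [hUU, one_mulVec]
  have h3 : y ⬝ᵥ (Matrix.diagonal hH.eigenvalues) *ᵥ y = ∑ i, hH.eigenvalues i * (y i * y i) := by
    simp [dotProduct, mulVec_diagonal]
    congr 1; ext i; ring
  rw [h1, h3, ← h2]
  have : (y ⬝ᵥ y) = ∑ i, y i * y i := rfl
  rw [this, Finset.mul_sum]
  apply Finset.sum_le_sum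
  intro i _
  have : y i * y i ≥ 0 := mul_self_nonneg _
  exact mul_le_mul_of_nonneg_right (hb i) this


section
open scoped MatrixOrder
noncomputable def Matrix.PosSemidef.sqrt {n : ℕ} {M : Matrix (Fin n) (Fin n) ℝ} (_ : M.PosSemidef) :
    Matrix (Fin n) (Fin n) ℝ := CFC.sqrt M
lemma Matrix.PosSemidef.sqrt_mul_self {n : ℕ} {M : Matrix (Fin n) (Fin n) ℝ} (h : M.PosSemidef) :
    h.sqrt * h.sqrt = M := CFC.sqrt_mul_sqrt_self M h.nonneg
lemma Matrix.PosSemidef.posSemidef_sqrt {n : ℕ} {M : Matrix (Fin n) (Fin n) ℝ} (h : M.PosSemidef) :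
    h.sqrt.PosSemidef := (CFC.sqrt_nonneg M).posSemidef
end

lemma dot_form {N s : ℕ} (A : Matrix (Fin N) (Fin s) ℝ) (Q : Matrix (Fin N) (Fin N) ℝ)
    (hQsym : Qᵀ = Q) (w : Fin s → ℝ) :
    w ⬝ᵥ (Aᵀ * Q * A) *ᵥ w = (A *ᵥ w) ⬝ᵥ Q *ᵥ (A *ᵥ w) := by
  symm
  calc (A *ᵥ w) ⬝ᵥ Q *ᵥ (A *ᵥ w) = (A *ᵥ w) ⬝ᵥ (Q * A) *ᵥ w := by rw [mulVec_mulVec]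
  _ = ((A *ᵥ w) ᵥ* (Q * A)) ⬝ᵥ w := dotProduct_mulVec _ _ _
  _ = ((Q * A)ᵀ *ᵥ (A *ᵥ w)) ⬝ᵥ w := by rw [mulVec_transpose]
  _ = ((Aᵀ * Qᵀ) *ᵥ (A *ᵥ w)) ⬝ᵥ w := by rw [transpose_mul]
  _ = ((Aᵀ * Qᵀ * A) *ᵥ w) ⬝ᵥ w := by rw [mulVec_mulVec]
  _ = ((Aᵀ * Q * A) *ᵥ w) ⬝ᵥ w := by rw [hQsym]
  _ = w ⬝ᵥ (Aᵀ * Q * A) *ᵥ w := dotProduct_comm _ _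

lemma dot_form' {N s : ℕ} (A : Matrix (Fin N) (Fin s) ℝ) (w : Fin s → ℝ) :
    w ⬝ᵥ (Aᵀ * A) *ᵥ w = (A *ᵥ w) ⬝ᵥ (A *ᵥ w) := by
  symm
  calc (A *ᵥ w) ⬝ᵥ (A *ᵥ w) = ((A *ᵥ w) ᵥ* A) ⬝ᵥ w := dotProduct_mulVec _ _ _
  _ = (Aᵀ *ᵥ (A *ᵥ w)) ⬝ᵥ w := by rw [mulVec_transpose]
  _ = ((Aᵀ * A) *ᵥ w) ⬝ᵥ w := by rw [mulVec_mulVec]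
  _ = w ⬝ᵥ (Aᵀ * A) *ᵥ w := dotProduct_comm _ _

lemma main_core {N s : ℕ} (A : Matrix (Fin N) (Fin s) ℝ) (Q : Matrix (Fin N) (Fin N) ℝ)
    (Mc T Ti : Matrix (Fin s) (Fin s) ℝ) (lamMax : ℝ)
    (hQsym : Qᵀ = Q)
    (hGMc : (Aᵀ * A) * Mc = Aᵀ * Q * A)
    (hGunit : IsUnit (Aᵀ * A).det)
    (hTT : T * T = Aᵀ * A) (hTsym : Tᵀ = T)
    (hTTi : T * Ti = 1) (hTiT : Ti * T = 1) (hTisym : Tiᵀ = Ti)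
    (hlamub : ∀ (μ : ℝ) (w : Fin s → ℝ), w ≠ 0 → Mc *ᵥ w = μ • w → μ ≤ lamMax) :
    ∀ w : Fin s → ℝ, w ⬝ᵥ (Aᵀ * Q * A) *ᵥ w ≤ lamMax * (w ⬝ᵥ (Aᵀ * A) *ᵥ w) := by
  classical
  have hKsym : (Aᵀ * Q * A)ᵀ = Aᵀ * Q * A := by
    rw [transpose_mul, transpose_mul, transpose_transpose, hQsym, Matrix.mul_assoc]
  have hHherm : (Ti * (Aᵀ * Q * A) * Ti).IsHermitian := by
    show _ᴴ = _
    rw [Matrix.conjTranspose_eq_transpose_of_trivial, transpose_mul, transpose_mul,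
      hTisym, hKsym]
    simp only [Matrix.mul_assoc]
  have hKTHT : Aᵀ * Q * A = T * (Ti * (Aᵀ * Q * A) * Ti) * T := by
    calc Aᵀ * Q * A = (T * Ti) * (Aᵀ * Q * A) * (Ti * T) := by
          rw [hTTi, hTiT, Matrix.one_mul, Matrix.mul_one]
    _ = T * (Ti * (Aᵀ * Q * A) * Ti) * T := by simp only [Matrix.mul_assoc]
  -- eigenvalue bound for H
  have heigbound : ∀ i, hHherm.eigenvalues i ≤ lamMax := by
    intro i
    set y : Fin s → ℝ := ⇑(hHherm.eigenvectorBasis i) with hydef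
    have hy0 : y ≠ 0 := by
      have h := hHherm.eigenvectorBasis.orthonormal.ne_zero i
      intro hc
      apply h
      ext j
      exact congrFun hc j
    have hmv : (Ti * (Aᵀ * Q * A) * Ti) *ᵥ y = hHherm.eigenvalues i • y :=
      hHherm.mulVec_eigenvectorBasis i
    have hTw : T *ᵥ (Ti *ᵥ y) = y := by rw [mulVec_mulVec, hTTi, one_mulVec]
    have hw0 : Ti *ᵥ y ≠ 0 := by
      intro hc
      apply hy0
      rw [← hTw, hc, mulVec_zero]
    have hKw : (Aᵀ * Q * A) *ᵥ (Ti *ᵥ y) = hHherm.eigenvalues i • (T *ᵥ y) := by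
      conv_lhs => rw [hKTHT]
      rw [← mulVec_mulVec, hTw, ← mulVec_mulVec, hmv, mulVec_smul]
    have hGw : (Aᵀ * A) *ᵥ (Mc *ᵥ (Ti *ᵥ y)) = (Aᵀ * A) *ᵥ (hHherm.eigenvalues i • (Ti *ᵥ y)) := by
      rw [mulVec_mulVec, hGMc, hKw, mulVec_smul, ← hTT, ← mulVec_mulVec, hTw]
    have hcan : ∀ x : Fin s → ℝ, (Aᵀ * A)⁻¹ *ᵥ ((Aᵀ * A) *ᵥ x) = x := by
      intro x
      rw [mulVec_mulVec, Matrix.nonsing_inv_mul _ hGunit, one_mulVec]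
    have hMcw : Mc *ᵥ (Ti *ᵥ y) = hHherm.eigenvalues i • (Ti *ᵥ y) := by
      have h := congrArg (fun x => (Aᵀ * A)⁻¹ *ᵥ x) hGw
      rw [hcan, hcan] at h
      exact h
    exact hlamub _ _ hw0 hMcw
  intro w
  -- relate the two quadratic forms through T
  have hT2 : w ⬝ᵥ (Aᵀ * A) *ᵥ w = (T *ᵥ w) ⬝ᵥ (T *ᵥ w) := by
    rw [← hTT]
    have := dot_form' T w
    rw [hTsym] at this
    exact this
  have hH2 : w ⬝ᵥ (Aᵀ * Q * A) *ᵥ w = (T *ᵥ w) ⬝ᵥ (Ti * (Aᵀ * Q * A) * Ti) *ᵥ (T *ᵥ w) := by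
    symm
    calc (T *ᵥ w) ⬝ᵥ (Ti * (Aᵀ * Q * A) * Ti) *ᵥ (T *ᵥ w)
        = (T *ᵥ w) ⬝ᵥ ((Ti * (Aᵀ * Q * A) * Ti) * T) *ᵥ w := by rw [mulVec_mulVec]
    _ = (T *ᵥ w) ⬝ᵥ (Ti * (Aᵀ * Q * A)) *ᵥ w := by
          rw [Matrix.mul_assoc (Ti * (Aᵀ * Q * A)) Ti T, hTiT, Matrix.mul_one]
    _ = ((T *ᵥ w) ᵥ* (Ti * (Aᵀ * Q * A))) ⬝ᵥ w := dotProduct_mulVec _ _ _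
    _ = ((Ti * (Aᵀ * Q * A))ᵀ *ᵥ (T *ᵥ w)) ⬝ᵥ w := by rw [mulVec_transpose]
    _ = (((Aᵀ * Q * A) * Ti) *ᵥ (T *ᵥ w)) ⬝ᵥ w := by rw [transpose_mul, hKsym, hTisym]
    _ = ((((Aᵀ * Q * A) * Ti) * T) *ᵥ w) ⬝ᵥ w := by rw [mulVec_mulVec]
    _ = ((Aᵀ * Q * A) *ᵥ w) ⬝ᵥ w := by rw [Matrix.mul_assoc, hTiT, Matrix.mul_one]
    _ = w ⬝ᵥ (Aᵀ * Q * A) *ᵥ w := dotProduct_comm _ _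
  rw [hH2, hT2]
  exact rayleigh_bound hHherm heigbound (T *ᵥ w)

/-- The four Penrose conditions characterizing the Moore–Penrose pseudoinverse `Md` of `M`. -/
def IsMoorePenrose {N s : ℕ} (M : Matrix (Fin N) (Fin s) ℝ)
    (Md : Matrix (Fin s) (Fin N) ℝ) : Prop :=
  M * Md * M = M ∧ Md * M * Md = Md ∧ (M * Md)ᵀ = M * Md ∧ (Md * M)ᵀ = Md * M

/-- Let `A, B ∈ ℝ^{N×s}` both have full column rank, `λ_max` the largest
eigenvalue of `M_c = I − (A†B)(B†A)`, and `v` an eigenvector of `M_c` for `λ_max`. Then the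
unit vector `u* = A v / ‖A v‖` attains the supremum of `‖u − B B† u‖²` over unit vectors
`u ∈ col(A)`: the value at `u*` equals `λ_max` and is the greatest element of that set. -/
theorem stmt_6 {N s : ℕ}
    (A B : Matrix (Fin N) (Fin s) ℝ)
    (Adag Bdag : Matrix (Fin s) (Fin N) ℝ)
    (hArank : A.rank = s) (hBrank : B.rank = s)
    (hAdag : IsMoorePenrose A Adag) (hBdag : IsMoorePenrose B Bdag)
    (lamMax : ℝ)
    (hlam : IsGreatest {μ : ℝ | ∃ w : Fin s → ℝ, w ≠ 0 ∧
      ((1 : Matrix (Fin s) (Fin s) ℝ) - (Adag * B) * (Bdag * A)).mulVec w = μ • w} lamMax)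
    (v : Fin s → ℝ) (hv : v ≠ 0)
    (heig : ((1 : Matrix (Fin s) (Fin s) ℝ) - (Adag * B) * (Bdag * A)).mulVec v
      = lamMax • v) :
    -- u* = A v / ‖A v‖
    let ustar : Fin N → ℝ := (Real.sqrt (∑ i, (A.mulVec v i) ^ 2))⁻¹ • A.mulVec v
    (∑ i, ((ustar - B.mulVec (Bdag.mulVec ustar)) i) ^ 2 = lamMax) ∧
    IsGreatest {r : ℝ | ∃ u : Fin N → ℝ, u ∈ LinearMap.range A.mulVecLin ∧
        (∑ i, (u i) ^ 2 = 1) ∧ r = ∑ i, ((u - B.mulVec (Bdag.mulVec u)) i) ^ 2}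
      (∑ i, ((ustar - B.mulVec (Bdag.mulVec ustar)) i) ^ 2) := by
  classical
  intro ustar
  -- Injectivity of A
  have hAinj : Function.Injective A.mulVecLin := by
    rw [← LinearMap.ker_eq_bot]
    have hfr : Module.finrank ℝ (LinearMap.range A.mulVecLin) = s := hArank
    have h1 := A.mulVecLin.finrank_range_add_finrank_ker
    rw [hfr] at h1
    simp only [Module.finrank_pi, Fintype.card_fin] at h1
    have h2 : Module.finrank ℝ (LinearMap.ker A.mulVecLin) = 0 := by omega
    exact Submodule.finrank_eq_zero.mp h2
  have hAdA : Adag * A = 1 := by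
    apply matrix_eq_of_mulVec_eq
    intro x
    apply hAinj
    show A *ᵥ ((Adag * A) *ᵥ x) = A *ᵥ (1 *ᵥ x)
    rw [mulVec_mulVec, ← Matrix.mul_assoc, hAdag.1, one_mulVec]
  have hGAdag : Aᵀ * A * Adag = Aᵀ := by
    calc Aᵀ * A * Adag = Aᵀ * (A * Adag) := by rw [Matrix.mul_assoc]
    _ = Aᵀ * (Adagᵀ * Aᵀ) := by rw [← hAdag.2.2.1, transpose_mul]
    _ = (Adag * A)ᵀ * Aᵀ := by rw [transpose_mul, Matrix.mul_assoc]
    _ = Aᵀ := by rw [hAdA, transpose_one, Matrix.one_mul]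
  have hGunit : IsUnit (Aᵀ * A).det := by
    apply Matrix.isUnit_det_of_right_inverse (B := Adag * Adagᵀ)
    calc (Aᵀ * A) * (Adag * Adagᵀ) = (Aᵀ * A * Adag) * Adagᵀ := by
          simp only [Matrix.mul_assoc]
    _ = Aᵀ * Adagᵀ := by rw [hGAdag]
    _ = (Adag * A)ᵀ := by rw [transpose_mul]
    _ = 1 := by rw [hAdA, transpose_one]
  -- P and Q
  have hPsym : (B * Bdag)ᵀ = B * Bdag := hBdag.2.2.1
  have hPP : (B * Bdag) * (B * Bdag) = B * Bdag := by
    calc (B * Bdag) * (B * Bdag) = B * (Bdag * B * Bdag) := by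
          simp only [Matrix.mul_assoc]
    _ = B * Bdag := by rw [hBdag.2.1]
  have hQsym : ((1 : Matrix (Fin N) (Fin N) ℝ) - B * Bdag)ᵀ
      = (1 : Matrix (Fin N) (Fin N) ℝ) - B * Bdag := by
    rw [transpose_sub, transpose_one, hPsym]
  have hQQ : ((1 : Matrix (Fin N) (Fin N) ℝ) - B * Bdag) * (1 - B * Bdag)
      = 1 - B * Bdag := by
    have h : ((1 : Matrix (Fin N) (Fin N) ℝ) - B * Bdag) * (1 - B * Bdag)
        = 1 - B * Bdag - B * Bdag + (B * Bdag) * (B * Bdag) := by noncomm_ring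
    rw [h, hPP]
    noncomm_ring
  -- the value function
  have hfval : ∀ u : Fin N → ℝ,
      ∑ i, ((u - B *ᵥ (Bdag *ᵥ u)) i) ^ 2
        = u ⬝ᵥ ((1 : Matrix (Fin N) (Fin N) ℝ) - B * Bdag) *ᵥ u := by
    intro u
    have hQu : u - B *ᵥ (Bdag *ᵥ u)
        = ((1 : Matrix (Fin N) (Fin N) ℝ) - B * Bdag) *ᵥ u := by
      rw [Matrix.sub_mulVec, one_mulVec, mulVec_mulVec]
    rw [hQu, sum_sq_eq_dot]
    rw [dotProduct_mulVec, ← mulVec_transpose, hQsym, mulVec_mulVec, hQQ]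
    exact dotProduct_comm _ _
  -- K := Aᵀ * (1 - B Bdag) * A  and  Mc := 1 - Adag B Bdag A
  have hGMc : (Aᵀ * A) * ((1 : Matrix (Fin s) (Fin s) ℝ) - (Adag * B) * (Bdag * A))
      = Aᵀ * ((1 : Matrix (Fin N) (Fin N) ℝ) - B * Bdag) * A := by
    have h1 : (Aᵀ * A) * ((1 : Matrix (Fin s) (Fin s) ℝ) - (Adag * B) * (Bdag * A))
        = Aᵀ * A - (Aᵀ * A * Adag) * B * (Bdag * A) := by
      rw [Matrix.mul_sub, Matrix.mul_one]
      simp only [Matrix.mul_assoc]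
    rw [h1, hGAdag, Matrix.mul_sub, Matrix.sub_mul, Matrix.mul_one]
    simp only [Matrix.mul_assoc]
  have hKsym : (Aᵀ * ((1 : Matrix (Fin N) (Fin N) ℝ) - B * Bdag) * A)ᵀ
      = Aᵀ * ((1 : Matrix (Fin N) (Fin N) ℝ) - B * Bdag) * A := by
    rw [transpose_mul, transpose_mul, transpose_transpose, hQsym, Matrix.mul_assoc]
  -- square root of G
  have hGpsd : (Aᵀ * A).PosSemidef := by
    have h := Matrix.posSemidef_conjTranspose_mul_self A
    rwa [Matrix.conjTranspose_eq_transpose_of_trivial] at h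
  have hTT : hGpsd.sqrt * hGpsd.sqrt = Aᵀ * A := hGpsd.sqrt_mul_self
  have hTsym : hGpsd.sqrtᵀ = hGpsd.sqrt := by
    rw [← Matrix.conjTranspose_eq_transpose_of_trivial]
    exact hGpsd.posSemidef_sqrt.1
  have hTdet : IsUnit hGpsd.sqrt.det := by
    have h := hGunit
    rw [← hTT, det_mul] at h
    exact (IsUnit.mul_iff.mp h).1
  have hTTi : hGpsd.sqrt * hGpsd.sqrt⁻¹ = 1 := Matrix.mul_nonsing_inv _ hTdet
  have hTiT : hGpsd.sqrt⁻¹ * hGpsd.sqrt = 1 := Matrix.nonsing_inv_mul _ hTdet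
  have hTisym : (hGpsd.sqrt⁻¹)ᵀ = hGpsd.sqrt⁻¹ := by
    rw [Matrix.transpose_nonsing_inv, hTsym]
  -- the core spectral inequality
  have hcore := main_core A ((1 : Matrix (Fin N) (Fin N) ℝ) - B * Bdag)
    ((1 : Matrix (Fin s) (Fin s) ℝ) - (Adag * B) * (Bdag * A))
    hGpsd.sqrt hGpsd.sqrt⁻¹ lamMax hQsym hGMc hGunit hTT hTsym hTTi hTiT hTisym
    (fun μ w hw0 hMcw => hlam.2 ⟨w, hw0, hMcw⟩)
  -- upper bound for the set
  have hub : ∀ r ∈ {r : ℝ | ∃ u : Fin N → ℝ, u ∈ LinearMap.range A.mulVecLin ∧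
      (∑ i, (u i) ^ 2 = 1) ∧ r = ∑ i, ((u - B.mulVec (Bdag.mulVec u)) i) ^ 2},
      r ≤ lamMax := by
    rintro r ⟨u, ⟨w, rfl⟩, hnorm, rfl⟩
    have hu : A.mulVecLin w = A *ᵥ w := rfl
    rw [hu] at hnorm ⊢
    rw [hfval]
    have h1 : (A *ᵥ w) ⬝ᵥ ((1 : Matrix (Fin N) (Fin N) ℝ) - B * Bdag) *ᵥ (A *ᵥ w)
        = w ⬝ᵥ (Aᵀ * ((1 : Matrix (Fin N) (Fin N) ℝ) - B * Bdag) * A) *ᵥ w :=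
      (dot_form A _ hQsym w).symm
    rw [h1]
    have h3 : (A *ᵥ w) ⬝ᵥ (A *ᵥ w) = 1 := by rw [← sum_sq_eq_dot]; exact hnorm
    have h2 := hcore w
    rw [dot_form' A w, h3, mul_one] at h2
    exact h2
  -- the value at ustar
  have hAv0 : A *ᵥ v ≠ 0 := by
    intro hc
    apply hv
    apply hAinj
    show A *ᵥ v = A *ᵥ 0
    rw [hc, mulVec_zero]
  have hdpos : 0 < (A *ᵥ v) ⬝ᵥ (A *ᵥ v) := by
    rcases lt_or_eq_of_le (Finset.sum_nonneg fun i _ => mul_self_nonneg ((A *ᵥ v) i)) with h | h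
    · exact h
    · exact absurd (dotProduct_self_eq_zero.mp h.symm) hAv0
  have hustar : ustar = (Real.sqrt ((A *ᵥ v) ⬝ᵥ (A *ᵥ v)))⁻¹ • (A *ᵥ v) := by
    show (Real.sqrt (∑ i, ((A *ᵥ v) i) ^ 2))⁻¹ • (A *ᵥ v) = _
    rw [sum_sq_eq_dot]
  have hcc : Real.sqrt ((A *ᵥ v) ⬝ᵥ (A *ᵥ v)) * Real.sqrt ((A *ᵥ v) ⬝ᵥ (A *ᵥ v))
      = (A *ᵥ v) ⬝ᵥ (A *ᵥ v) := Real.mul_self_sqrt hdpos.le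
  have hcne : Real.sqrt ((A *ᵥ v) ⬝ᵥ (A *ᵥ v)) ≠ 0 := (Real.sqrt_pos.mpr hdpos).ne'
  have hQAv : (A *ᵥ v) ⬝ᵥ ((1 : Matrix (Fin N) (Fin N) ℝ) - B * Bdag) *ᵥ (A *ᵥ v)
      = lamMax * ((A *ᵥ v) ⬝ᵥ (A *ᵥ v)) := by
    rw [← dot_form A _ hQsym v, ← hGMc, ← mulVec_mulVec, heig, mulVec_smul,
      dotProduct_smul, smul_eq_mul, dot_form' A v]
  have hval : ∑ i, ((ustar - B.mulVec (Bdag.mulVec ustar)) i) ^ 2 = lamMax := by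
    rw [hfval, hustar, mulVec_smul, smul_dotProduct, dotProduct_smul,
      smul_eq_mul, smul_eq_mul, hQAv]
    exact inv_mul_helper hcc hcne
  have hnorm1 : ∑ i, (ustar i) ^ 2 = 1 := by
    rw [hustar, sum_sq_eq_dot, smul_dotProduct, dotProduct_smul, smul_eq_mul, smul_eq_mul]
    exact inv_mul_helper2 hcc hcne
  have hmem : ustar ∈ LinearMap.range A.mulVecLin := by
    refine ⟨(Real.sqrt ((A *ᵥ v) ⬝ᵥ (A *ᵥ v)))⁻¹ • v, ?_⟩
    show A *ᵥ ((Real.sqrt ((A *ᵥ v) ⬝ᵥ (A *ᵥ v)))⁻¹ • v) = ustar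
    rw [mulVec_smul, hustar]
  refine ⟨hval, ?_, ?_⟩
  · exact ⟨ustar, hmem, hnorm1, rfl⟩
  · intro r hr
    rw [hval]
    exact hub r hr
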